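/- Lemma D.1 (optimality of the uniform singular-value profile): If ζ is exchangeable, then for every λ ∈ ℝ^k with Σ_i λ_i² ≤ R², F(λ) ≤ F(λ*), where λ* ∈ ℝ^k is the uniform vector with λ*_i = R/√k for all i. In particular, the uniform profile maximizes F over the Euclidean ball of radius R. -/
import Mathlib


open scoped BigOperators

/-- Objective `F(λ) = Σ_{(z,z')} ζ(z,z')·√(Σ_i λ_i²·1[z_i ≠ z'_i])`, where points of
`{−1,+1}^k` are encoded as `Fin k → Bool`. -/
noncomputable def F {k : ℕ} (ζ : ((Fin k → Bool) × (Fin k → Bool)) → ℝ)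
    (lam : Fin k → ℝ) : ℝ :=
  ∑ p : (Fin k → Bool) × (Fin k → Bool),
    ζ p * Real.sqrt (∑ i, (lam i) ^ 2 * (if p.1 i ≠ p.2 i then 1 else 0))

/-- `ζ` is exchangeable: invariant under simultaneous coordinate permutations. -/
def Exchangeable {k : ℕ} (ζ : ((Fin k → Bool) × (Fin k → Bool)) → ℝ) : Prop :=
  ∀ σ : Equiv.Perm (Fin k), ∀ p : (Fin k → Bool) × (Fin k → Bool),
    ζ (p.1 ∘ σ, p.2 ∘ σ) = ζ p

/-- Cauchy–Schwarz: sum of square roots is at most `√card · √sum`. -/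
lemma sum_sqrt_le_sqrt_card_mul {ι : Type*} [Fintype ι] (x : ι → ℝ) (hx : ∀ i, 0 ≤ x i) :
    ∑ i, Real.sqrt (x i) ≤ Real.sqrt (Fintype.card ι) * Real.sqrt (∑ i, x i) := by
  rw [← Real.sqrt_mul (by positivity)]
  rw [Real.le_sqrt (Finset.sum_nonneg fun i _ => Real.sqrt_nonneg _)
    (mul_nonneg (Nat.cast_nonneg _) (Finset.sum_nonneg fun i _ => hx i))]
  calc (∑ i, Real.sqrt (x i)) ^ 2
      ≤ (Finset.univ.card : ℝ) * ∑ i, Real.sqrt (x i) ^ 2 := sq_sum_le_card_mul_sum_sq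
    _ = (Fintype.card ι : ℝ) * ∑ i, x i := by
        rw [Finset.card_univ]
        congr 1
        exact Finset.sum_congr rfl fun i _ => Real.sq_sqrt (hx i)

/-- The sum over all permutations of `lam (σ i)^2` does not depend on `i`. -/
lemma perm_sum_const {k : ℕ} (lam : Fin k → ℝ) (i i' : Fin k) :
    ∑ σ : Equiv.Perm (Fin k), lam (σ i) ^ 2 = ∑ σ : Equiv.Perm (Fin k), lam (σ i') ^ 2 := by
  have := Equiv.sum_comp (Equiv.mulRight (Equiv.swap i i'))
    (fun σ : Equiv.Perm (Fin k) => lam (σ i) ^ 2)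
  simp only [Equiv.coe_mulRight, Equiv.Perm.mul_apply, Equiv.swap_apply_left] at this
  exact this.symm

lemma perm_sum_eq {k : ℕ} (hk : 1 ≤ k) (lam : Fin k → ℝ) (i : Fin k) :
    ∑ σ : Equiv.Perm (Fin k), lam (σ i) ^ 2
      = (Fintype.card (Equiv.Perm (Fin k)) : ℝ) * (∑ j, lam j ^ 2) / k := by
  have hkey : (k : ℝ) * ∑ σ : Equiv.Perm (Fin k), lam (σ i) ^ 2
      = (Fintype.card (Equiv.Perm (Fin k)) : ℝ) * (∑ j, lam j ^ 2) := by
    calc (k : ℝ) * ∑ σ : Equiv.Perm (Fin k), lam (σ i) ^ 2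
        = ∑ i' : Fin k, ∑ σ : Equiv.Perm (Fin k), lam (σ i') ^ 2 := by
          rw [Finset.sum_congr rfl fun i' _ => (perm_sum_const lam i' i)]
          simp [Finset.sum_const, Finset.card_univ, nsmul_eq_mul]
      _ = ∑ σ : Equiv.Perm (Fin k), ∑ i' : Fin k, lam (σ i') ^ 2 := Finset.sum_comm
      _ = ∑ _σ : Equiv.Perm (Fin k), ∑ j, lam j ^ 2 := by
          refine Finset.sum_congr rfl fun σ _ => ?_
          exact Equiv.sum_comp σ (fun j => lam j ^ 2)
      _ = (Fintype.card (Equiv.Perm (Fin k)) : ℝ) * (∑ j, lam j ^ 2) := by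
          simp [Finset.sum_const, Finset.card_univ, nsmul_eq_mul]
  have hk0 : (k : ℝ) ≠ 0 := by positivity
  field_simp [hk0] at hkey ⊢
  linarith [hkey]

/-- `F` is invariant under permuting the coordinates of `lam`, by exchangeability. -/
lemma F_comp_perm {k : ℕ} (ζ : ((Fin k → Bool) × (Fin k → Bool)) → ℝ)
    (hex : Exchangeable ζ) (lam : Fin k → ℝ) (σ : Equiv.Perm (Fin k)) :
    F ζ (lam ∘ σ) = F ζ lam := by
  unfold F
  set E : ((Fin k → Bool) × (Fin k → Bool)) ≃ ((Fin k → Bool) × (Fin k → Bool)) :=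
    Equiv.prodCongr (Equiv.arrowCongr σ (Equiv.refl Bool)) (Equiv.arrowCongr σ (Equiv.refl Bool))
    with hE
  refine Fintype.sum_equiv E _ _ (fun p => ?_)
  have hEp : ((E p).1 ∘ ⇑σ, (E p).2 ∘ ⇑σ) = p := by
    ext j <;> simp [hE, Equiv.arrowCongr, Function.comp]
  have h1 : ζ (E p) = ζ p := by
    have := hex σ (E p)
    rw [hEp] at this
    exact this.symm
  rw [h1]
  congr 1
  congr 1
  refine Fintype.sum_equiv σ
    (fun i => (lam ∘ σ) i ^ 2 * (if p.1 i ≠ p.2 i then 1 else 0))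
    (fun j => lam j ^ 2 * (if (E p).1 j ≠ (E p).2 j then 1 else 0)) (fun i => ?_)
  have h2 : (E p).1 (σ i) = p.1 i := by simp [hE, Equiv.arrowCongr, Function.comp]
  have h3 : (E p).2 (σ i) = p.2 i := by simp [hE, Equiv.arrowCongr, Function.comp]
  simp only [Function.comp_apply, h2, h3]

/-- Lemma D.1 (optimality of the uniform singular-value profile): if `ζ` is
exchangeable, the uniform vector `λ*_i = R/√k` maximizes `F` over the Euclidean
ball of radius `R`. -/
theorem uniform_profile_maximizes
    (k : ℕ) (hk : 1 ≤ k) (R : ℝ) (hR : 0 ≤ R)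
    (ζ : ((Fin k → Bool) × (Fin k → Bool)) → ℝ)
    (hζ0 : ∀ p, 0 ≤ ζ p) (hζ1 : ∑ p, ζ p = 1)
    (hex : Exchangeable ζ) :
    ∀ lam : Fin k → ℝ, (∑ i, (lam i) ^ 2) ≤ R ^ 2 →
      F ζ lam ≤ F ζ (fun _ => R / Real.sqrt k) := by
  intro lam hlam
  set n : ℝ := (Fintype.card (Equiv.Perm (Fin k)) : ℝ) with hn
  have hk0 : (0 : ℝ) < k := by exact_mod_cast hk
  have hn0 : (0 : ℝ) < n := by
    rw [hn]
    exact_mod_cast (Fintype.card_pos : 0 < Fintype.card (Equiv.Perm (Fin k)))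
  set S : ℝ := ∑ j, lam j ^ 2 with hS
  have hS0 : 0 ≤ S := Finset.sum_nonneg fun j _ => sq_nonneg _
  -- key per-pair bound
  have key : ∀ p : (Fin k → Bool) × (Fin k → Bool),
      ∑ σ : Equiv.Perm (Fin k),
        Real.sqrt (∑ i, lam (σ i) ^ 2 * (if p.1 i ≠ p.2 i then 1 else 0))
      ≤ n * Real.sqrt (∑ i, (R / Real.sqrt k) ^ 2 * (if p.1 i ≠ p.2 i then 1 else 0)) := by
    intro p
    set c : Fin k → ℝ := fun i => if p.1 i ≠ p.2 i then 1 else 0 with hc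
    have hc0 : ∀ i, 0 ≤ c i := fun i => by simp only [hc]; split <;> norm_num
    set T : ℝ := ∑ i, c i with hT
    have hT0 : 0 ≤ T := Finset.sum_nonneg fun i _ => hc0 i
    have hsum : ∑ σ : Equiv.Perm (Fin k), (∑ i, lam (σ i) ^ 2 * c i) = n * S * T / k := by
      rw [Finset.sum_comm]
      calc ∑ i, ∑ σ : Equiv.Perm (Fin k), lam (σ i) ^ 2 * c i
          = ∑ i, (∑ σ : Equiv.Perm (Fin k), lam (σ i) ^ 2) * c i := by
            refine Finset.sum_congr rfl fun i _ => ?_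
            rw [Finset.sum_mul]
        _ = ∑ i, (n * S / k) * c i := by
            refine Finset.sum_congr rfl fun i _ => ?_
            rw [perm_sum_eq hk lam i]
        _ = (n * S / k) * T := by rw [← Finset.mul_sum]
        _ = n * S * T / k := by ring
    have step1 : ∑ σ : Equiv.Perm (Fin k), Real.sqrt (∑ i, lam (σ i) ^ 2 * c i)
        ≤ Real.sqrt n * Real.sqrt (n * S * T / k) := by
      have := sum_sqrt_le_sqrt_card_mul (fun σ : Equiv.Perm (Fin k) => ∑ i, lam (σ i) ^ 2 * c i)
        (fun σ => Finset.sum_nonneg fun i _ => mul_nonneg (sq_nonneg _) (hc0 i))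
      rw [hsum] at this
      exact this
    have step2 : Real.sqrt n * Real.sqrt (n * S * T / k) = n * Real.sqrt (S * T / k) := by
      rw [← Real.sqrt_mul hn0.le]
      have : n * (n * S * T / k) = n ^ 2 * (S * T / k) := by ring
      rw [this, Real.sqrt_mul (sq_nonneg n), Real.sqrt_sq hn0.le]
    have step3 : Real.sqrt (S * T / k) ≤ Real.sqrt (R ^ 2 * T / k) := by
      apply Real.sqrt_le_sqrt
      gcongr
    have step4 : Real.sqrt (R ^ 2 * T / k) = Real.sqrt (∑ i, (R / Real.sqrt k) ^ 2 * c i) := by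
      congr 1
      rw [← Finset.mul_sum, div_pow, Real.sq_sqrt hk0.le]
      ring
    calc ∑ σ : Equiv.Perm (Fin k), Real.sqrt (∑ i, lam (σ i) ^ 2 * c i)
        ≤ Real.sqrt n * Real.sqrt (n * S * T / k) := step1
      _ = n * Real.sqrt (S * T / k) := step2
      _ ≤ n * Real.sqrt (R ^ 2 * T / k) := by
          exact mul_le_mul_of_nonneg_left step3 hn0.le
      _ = n * Real.sqrt (∑ i, (R / Real.sqrt k) ^ 2 * c i) := by rw [step4]
  -- average over permutations
  have havg : n * F ζ lam = ∑ σ : Equiv.Perm (Fin k), F ζ (lam ∘ σ) := by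
    rw [Finset.sum_congr rfl fun σ _ => F_comp_perm ζ hex lam σ]
    simp [Finset.sum_const, Finset.card_univ, nsmul_eq_mul, hn]
  have hmain : n * F ζ lam ≤ n * F ζ (fun _ => R / Real.sqrt k) := by
    rw [havg]
    have hswap : ∑ σ : Equiv.Perm (Fin k), F ζ (lam ∘ σ) =
        ∑ p : (Fin k → Bool) × (Fin k → Bool), ζ p *
          ∑ σ : Equiv.Perm (Fin k),
            Real.sqrt (∑ i, lam (σ i) ^ 2 * (if p.1 i ≠ p.2 i then 1 else 0)) := by
      unfold F
      rw [Finset.sum_comm]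
      refine Finset.sum_congr rfl fun p _ => ?_
      rw [Finset.mul_sum]
      refine Finset.sum_congr rfl fun σ _ => ?_
      simp [Function.comp]
    rw [hswap]
    have : n * F ζ (fun _ => R / Real.sqrt k) =
        ∑ p : (Fin k → Bool) × (Fin k → Bool), ζ p *
          (n * Real.sqrt (∑ i, (R / Real.sqrt k) ^ 2 * (if p.1 i ≠ p.2 i then 1 else 0))) := by
      unfold F
      rw [Finset.mul_sum]
      refine Finset.sum_congr rfl fun p _ => ?_
      ring
    rw [this]
    refine Finset.sum_le_sum fun p _ => ?_
    exact mul_le_mul_of_nonneg_left (key p) (hζ0 p)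
  exact le_of_mul_le_mul_left hmain hn0
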